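/- Let α be a non-zero algebraic number and let p be a rational prime such that α is not a p-adic unit. Then M_∞(α) ≥ p. In particular, if p is the largest prime such that α fails to be a p-adic unit, then M_∞(α) ≥ p. -/

import Mathlib

open Polynomial

noncomputable section

local notation "K" => AlgebraicClosure ℚ

/-- The leading coefficient of the primitive integer minimal polynomial of `α`,
i.e. the lcm of the denominators of the coefficients of `minpoly ℚ α`. -/
def primLead (α : K) : ℕ :=
  (minpoly ℚ α).support.lcm fun i => ((minpoly ℚ α).coeff i).den

/-- The Mahler measure `M(α)`: the leading coefficient of the integer minimal polynomial
of `α` times the product of `max 1 |z|` over the complex roots `z` of the minimal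
polynomial.  Equivalently, `M(α) = H(α) ^ deg α` where `H` is the absolute Weil height
`H(α) = ∏_v max {1, |α|_v}`. -/
def mahlerM (α : K) : ℝ :=
  primLead α * (((minpoly ℚ α).aroots ℂ).map fun z => max 1 ‖z‖).prod

/-- The absolute Weil height `H(α) = ∏_v max {1, |α|_v} = M(α) ^ (1 / deg α)`. -/
def weilH (α : K) : ℝ :=
  mahlerM α ^ (((minpoly ℚ α).natDegree : ℝ))⁻¹

/-- The strong (non-Archimedean) metric Mahler measure
`M_∞(α) = inf { max_n M(αₙ) : α = α₁α₂⋯ , αₙ = 1 for a.e. n }`. -/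
def MInf (α : Kˣ) : ℝ :=
  sInf {t : ℝ | ∃ a : ℕ → Kˣ, {n | a n ≠ 1}.Finite ∧ (∏ᶠ n, a n) = α ∧
    t = ⨆ n, mahlerM (a n : K)}

/-- The subring `ℤ_(p)` of `K`: the rational numbers expressible with denominator
prime to `p`. -/
def Zp (p : ℕ) (hp : p.Prime) : Subring K where
  carrier := {x | ∃ a b : ℤ, ¬ ((p : ℤ) ∣ b) ∧ (b : K) * x = (a : K)}
  zero_mem' := ⟨0, 1, (Nat.prime_iff_prime_int.mp hp).not_dvd_one, by simp⟩
  one_mem' := ⟨1, 1, (Nat.prime_iff_prime_int.mp hp).not_dvd_one, by simp⟩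
  add_mem' := by
    rintro x y ⟨a, b, hb, hab⟩ ⟨c, d, hd, hcd⟩
    exact ⟨a * d + c * b, b * d,
      fun h => (((Nat.prime_iff_prime_int.mp hp).dvd_mul.mp h).elim hb hd),
      by push_cast; linear_combination (d : K) * hab + (b : K) * hcd⟩
  neg_mem' := by
    rintro x ⟨a, b, hb, hab⟩
    exact ⟨-a, b, hb, by push_cast; linear_combination -hab⟩
  mul_mem' := by
    rintro x y ⟨a, b, hb, hab⟩ ⟨c, d, hd, hcd⟩
    exact ⟨a * c, b * d,
      fun h => (((Nat.prime_iff_prime_int.mp hp).dvd_mul.mp h).elim hb hd),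
      by push_cast; linear_combination ((d : K) * y) * hab + (a : K) * hcd⟩

/-- `α` is a `p`-adic unit iff both `α` and `α⁻¹` are integral over the local ring
`ℤ_(p)`; equivalently, `|α|_v = 1` for every place `v` of a number field containing `α`
that divides `p`. -/
def IsPadicUnit (p : ℕ) (hp : p.Prime) (α : K) : Prop :=
  IsIntegral (Zp p hp) α ∧ IsIntegral (Zp p hp) α⁻¹


section AuxMahler

open Polynomial

lemma mem_Zp_of_den_not_dvd {p : ℕ} (hp : p.Prime) {q : ℚ} (h : ¬ (p:ℤ) ∣ (q.den : ℤ)) :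
    algebraMap ℚ K q ∈ Zp p hp := by
  refine ⟨q.num, q.den, h, ?_⟩
  have h1 : (q.den : ℚ) * q = (q.num : ℚ) := by
    rw [mul_comm]; exact Rat.mul_den_eq_num q
  have := congrArg (algebraMap ℚ K) h1
  rwa [map_mul, map_natCast, map_intCast] at this

lemma isIntegral_of_coeff_mem {p : ℕ} (hp : p.Prime) {x : K} {Q : ℚ[X]} (hQ : Q.Monic)
    (hx : (Polynomial.aeval x) Q = 0) (hc : ∀ i, algebraMap ℚ K (Q.coeff i) ∈ Zp p hp) :
    IsIntegral (Zp p hp) x := by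
  set Q' := Q.map (algebraMap ℚ K) with hQ'
  have hsub : (↑Q'.coeffs : Set K) ⊆ (Zp p hp : Set K) := by
    intro c hcc
    obtain ⟨i, -, rfl⟩ := Polynomial.mem_coeffs_iff.mp hcc
    rw [hQ', coeff_map]
    exact hc i
  refine ⟨Q'.toSubring (Zp p hp) hsub, (Polynomial.monic_toSubring _ _ _).2 (hQ.map _), ?_⟩
  have hmap : (Q'.toSubring (Zp p hp) hsub).map (Subring.subtype (Zp p hp)) = Q' :=
    Polynomial.map_toSubring _ _ _
  have halg : algebraMap (Zp p hp) K = Subring.subtype (Zp p hp) := rfl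
  rw [Polynomial.eval₂_eq_eval_map, halg, hmap, hQ', Polynomial.eval_map, ← Polynomial.aeval_def]
  exact hx

lemma isPadicUnit_one {p : ℕ} (hp : p.Prime) : IsPadicUnit p hp 1 :=
  ⟨isIntegral_one, by rw [inv_one]; exact isIntegral_one⟩

lemma isPadicUnit_mul {p : ℕ} (hp : p.Prime) {x y : K} (hx : IsPadicUnit p hp x)
    (hy : IsPadicUnit p hp y) : IsPadicUnit p hp (x * y) :=
  ⟨hx.1.mul hy.1, by rw [mul_inv]; exact hx.2.mul hy.2⟩

lemma max_one_prod_le (s : Multiset ℝ) (h : ∀ x ∈ s, 0 ≤ x) :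
    max 1 s.prod ≤ (s.map (fun x => max 1 x)).prod := by
  induction s using Multiset.induction_on with
  | empty => simp
  | cons a s ih =>
    have ha : 0 ≤ a := h a (Multiset.mem_cons_self a s)
    have hs : ∀ x ∈ s, 0 ≤ x := fun x hx => h x (Multiset.mem_cons_of_mem hx)
    have hsp : 0 ≤ s.prod := Multiset.prod_nonneg hs
    have ih' := ih hs
    rw [Multiset.map_cons, Multiset.prod_cons, Multiset.prod_cons]
    have h1 : (1:ℝ) ≤ (s.map fun x => max 1 x).prod := le_trans (le_max_left _ _) ih'
    apply max_le
    · calc (1:ℝ) = 1 * 1 := (one_mul 1).symm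
        _ ≤ max 1 a * (s.map fun x => max 1 x).prod :=
          mul_le_mul (le_max_left _ _) h1 zero_le_one
            (le_trans zero_le_one (le_max_left _ _))
    · calc a * s.prod ≤ max 1 a * max 1 s.prod :=
          mul_le_mul (le_max_right _ _) (le_max_right _ _) hsp
            (le_trans ha (le_max_right _ _))
        _ ≤ max 1 a * (s.map fun x => max 1 x).prod :=
          mul_le_mul_of_nonneg_left ih'
            (le_trans zero_le_one (le_max_left _ _))

lemma p_le_mahlerM {p : ℕ} (hp : p.Prime) {β : K} (hβ : β ≠ 0)
    (h : ¬ IsPadicUnit p hp β) : (p : ℝ) ≤ mahlerM β := by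
  have hβint : IsIntegral ℚ β := ((AlgebraicClosure.isAlgebraic ℚ).isAlgebraic β).isIntegral
  set q : ℚ[X] := minpoly ℚ β with hqdef
  have hmo : q.Monic := minpoly.monic hβint
  have hc0 : q.coeff 0 ≠ 0 := minpoly.coeff_zero_ne_zero hβint hβ
  set L : ℕ := primLead β with hLdef
  have hLd : ∀ i, (q.coeff i).den ∣ L := by
    intro i
    by_cases hi : i ∈ q.support
    · exact Finset.dvd_lcm hi
    · rw [Polynomial.notMem_support_iff.mp hi]
      simp
  have hL0 : L ≠ 0 := by
    intro h0
    rw [hLdef, primLead] at h0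
    obtain ⟨i, -, hi⟩ := Finset.lcm_eq_zero_iff.mp h0
    exact (minpoly ℚ β).coeff i |>.den_nz hi
  set m : ℕ → ℤ := fun i => ((L / (q.coeff i).den : ℕ) : ℤ) * (q.coeff i).num with hm
  have hmQ : ∀ i, ((m i : ℚ)) = (L : ℚ) * q.coeff i := by
    intro i
    obtain ⟨k, hk⟩ := hLd i
    have h1 : L / (q.coeff i).den = k := by
      rw [hk, Nat.mul_div_cancel_left _ (q.coeff i).pos]
    have h2 : ((q.coeff i).den : ℚ) * q.coeff i = ((q.coeff i).num : ℚ) := by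
      rw [mul_comm]; exact Rat.mul_den_eq_num _
    rw [hm]
    simp only [h1]
    push_cast [hk]
    linear_combination (-(k:ℚ)) * h2
  have hmem : ∀ (b : ℤ), ¬ (p:ℤ) ∣ b → ∀ (c : ℚ) (a : ℤ), (a : ℚ) = (b : ℚ) * c →
      algebraMap ℚ K c ∈ Zp p hp := by
    intro b hb c a hac
    refine ⟨a, b, hb, ?_⟩
    have := congrArg (algebraMap ℚ K) hac
    rwa [map_mul, map_intCast, map_intCast, eq_comm] at this
  set T : ℝ := ((q.aroots ℂ).map fun z => max 1 ‖z‖).prod with hT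
  have haroot : mahlerM β = (L:ℝ) * T := rfl
  have habsnn : ∀ z ∈ (q.aroots ℂ).map (‖·‖), (0:ℝ) ≤ z := by
    intro z hz
    obtain ⟨w, -, rfl⟩ := Multiset.mem_map.mp hz
    exact norm_nonneg w
  have hTmax : max 1 ((q.aroots ℂ).map (‖·‖)).prod ≤ T := by
    have := max_one_prod_le ((q.aroots ℂ).map (‖·‖)) habsnn
    rwa [Multiset.map_map] at this
  have hprodroots : ((q.aroots ℂ).map (‖·‖)).prod = |(q.coeff 0 : ℝ)| := by
    have hsplit : ((q.map (algebraMap ℚ ℂ)).Splits) :=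
      IsAlgClosed.splits _
    have h1 := hsplit.coeff_zero_eq_prod_roots_of_monic (hmo.map (algebraMap ℚ ℂ))
    have h2 := congrArg (‖·‖) h1
    rw [Polynomial.coeff_map, norm_mul, norm_pow, norm_neg, norm_one, one_pow,
      one_mul] at h2
    have h3 : ‖(map (algebraMap ℚ ℂ) q).roots.prod‖ = ((map (algebraMap ℚ ℂ) q).roots.map (‖·‖)).prod :=
      map_multiset_prod (normHom : ℂ →*₀ ℝ) _
    rw [h3] at h2
    rw [eq_ratCast (algebraMap ℚ ℂ)] at h2
    rw [Complex.norm_ratCast] at h2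
    exact h2.symm
  rcases not_and_or.mp h with hA | hB
  · have hdL : (p:ℤ) ∣ (L:ℤ) := by
      by_contra hd
      apply hA
      refine isIntegral_of_coeff_mem hp hmo (minpoly.aeval ℚ β) ?_
      intro i
      refine hmem (L:ℤ) hd (q.coeff i) (m i) ?_
      rw [hmQ i]
      push_cast
      ring
    have hpL : (p:ℝ) ≤ (L:ℝ) := by
      exact_mod_cast Int.le_of_dvd (by exact_mod_cast Nat.pos_of_ne_zero hL0) hdL
    have hT1 : (1:ℝ) ≤ T := le_trans (le_max_left _ _) hTmax
    calc (p:ℝ) ≤ (L:ℝ) := hpL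
      _ = (L:ℝ) * 1 := (mul_one _).symm
      _ ≤ (L:ℝ) * T := mul_le_mul_of_nonneg_left hT1 (Nat.cast_nonneg L)
      _ = mahlerM β := haroot.symm
  · set d : ℕ := q.natDegree with hd
    set Q : ℚ[X] := Polynomial.C (q.coeff 0)⁻¹ * q.reverse with hQdef
    have hQcoeff : ∀ i, Q.coeff i = (q.coeff 0)⁻¹ * q.coeff (Polynomial.revAt d i) := by
      intro i
      rw [hQdef, Polynomial.coeff_C_mul, Polynomial.coeff_reverse]
    have hQmonic : Q.Monic := by
      apply Polynomial.monic_of_natDegree_le_of_coeff_eq_one d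
      · refine le_trans (Polynomial.natDegree_mul_le) ?_
        simpa using q.reverse_natDegree_le
      · rw [hQcoeff d, Polynomial.revAt_le (le_refl d), tsub_self]
        exact inv_mul_cancel₀ hc0
    have hrev : (Polynomial.aeval β⁻¹) Q = 0 := by
      letI : Invertible β := invertibleOfNonzero hβ
      have h0 : (Polynomial.aeval β) q = 0 := minpoly.aeval ℚ β
      have hrev0 : Polynomial.eval₂ (algebraMap ℚ K) (⅟β) q.reverse = 0 :=
        (Polynomial.eval₂_reverse_eq_zero_iff _ _ _).mpr (by rw [← Polynomial.aeval_def]; exact h0)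
      rw [hQdef, map_mul, Polynomial.aeval_C, Polynomial.aeval_def, ← invOf_eq_inv β, hrev0,
        mul_zero]
    have hdm0 : (p:ℤ) ∣ m 0 := by
      by_contra hd0
      apply hB
      refine isIntegral_of_coeff_mem hp hQmonic hrev ?_
      intro i
      rw [hQcoeff i]
      refine hmem (m 0) hd0 _ (m (Polynomial.revAt d i)) ?_
      rw [hmQ, hmQ]
      field_simp
    have hm0ne : m 0 ≠ 0 := by
      intro h0
      have h1 := hmQ 0
      rw [h0] at h1
      have hL0' : (L : ℚ) ≠ 0 := Nat.cast_ne_zero.mpr hL0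
      exact hc0 (by
        have := h1.symm
        rcases mul_eq_zero.mp this with h | h
        · exact absurd h hL0'
        · exact h)
    have hple : (p:ℤ) ≤ |m 0| := Int.le_of_dvd (abs_pos.mpr hm0ne) ((dvd_abs _ _).mpr hdm0)
    have habs0 : |((m 0 : ℤ) : ℝ)| = (L:ℝ) * |(q.coeff 0 : ℝ)| := by
      have h2 : ((m 0 : ℤ) : ℝ) = (L:ℝ) * ((q.coeff 0 : ℝ)) := by
        exact_mod_cast congrArg (fun x : ℚ => (x:ℝ)) (hmQ 0)
      rw [h2, abs_mul, Nat.abs_cast]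
    have hpr : (p:ℝ) ≤ |((m 0 : ℤ) : ℝ)| := by
      rw [← Int.cast_abs]
      exact_mod_cast hple
    have hc0T : |(q.coeff 0 : ℝ)| ≤ T := by
      rw [← hprodroots]
      exact le_trans (le_max_right _ _) hTmax
    calc (p:ℝ) ≤ |((m 0 : ℤ) : ℝ)| := hpr
      _ = (L:ℝ) * |(q.coeff 0 : ℝ)| := habs0
      _ ≤ (L:ℝ) * T := mul_le_mul_of_nonneg_left hc0T (Nat.cast_nonneg L)
      _ = mahlerM β := haroot.symm

end AuxMahler

/-- **Theorem.** If `α` is a non-zero algebraic number and `p` is a rational prime such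
that `α` is not a `p`-adic unit, then `M_∞(α) ≥ p`.  In particular this holds when `p`
is the largest such prime. -/
theorem MInf_ge_of_not_padicUnit (α : Kˣ) (p : ℕ) (hp : p.Prime)
    (h : ¬ IsPadicUnit p hp (α : K)) : (p : ℝ) ≤ MInf α := by
  apply le_csInf
  · refine ⟨_, fun n => if n = 0 then α else 1, ?_, ?_, rfl⟩
    · refine Set.Finite.subset (Set.finite_singleton 0) ?_
      intro n hn
      by_contra h0
      exact hn (if_neg (by simpa using h0))
    · rw [finprod_eq_single _ 0 (fun n hn => if_neg hn)]
      simp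
  · rintro t ⟨a, hfin, hprod, rfl⟩
    have hexists : ∃ n, ¬ IsPadicUnit p hp ((a n : K)) := by
      by_contra hall
      push_neg at hall
      apply h
      have hsupp : (Function.mulSupport fun n => ((a n : K))) ⊆ ↑hfin.toFinset := by
        intro n hn
        simp only [Set.Finite.coe_toFinset, Set.mem_setOf_eq]
        exact fun h1 => hn (by simp [h1])
      have hcoe : ((α : Kˣ) : K) = ∏ n ∈ hfin.toFinset, ((a n : K)) := by
        calc ((α : Kˣ) : K) = ((∏ᶠ n, a n : Kˣ) : K) := by rw [hprod]
          _ = ∏ᶠ n, ((a n : K)) :=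
            MonoidHom.map_finprod_of_injective (Units.coeHom K) (fun _ _ h => Units.ext h) a
          _ = ∏ n ∈ hfin.toFinset, ((a n : K)) :=
            finprod_eq_prod_of_mulSupport_subset _ hsupp
      rw [hcoe]
      exact Finset.prod_induction _ _ (fun x y hx hy => isPadicUnit_mul hp hx hy)
        (isPadicUnit_one hp) (fun i _ => hall i)
    obtain ⟨n0, hn0⟩ := hexists
    have hble : BddAbove (Set.range fun n => mahlerM ((a n : K))) := by
      apply Set.Finite.bddAbove
      have hsub : Set.range (fun n => mahlerM ((a n : K))) ⊆
          insert (mahlerM (((1 : Kˣ) : K))) ((fun n => mahlerM ((a n : K))) '' {n | a n ≠ 1}) := by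
        rintro x ⟨n, rfl⟩
        by_cases hn : a n = 1
        · exact Set.mem_insert_iff.mpr (Or.inl (by simp [hn]))
        · exact Set.mem_insert_iff.mpr (Or.inr ⟨n, hn, rfl⟩)
      exact Set.Finite.subset ((hfin.image _).insert _) hsub
    exact le_trans (p_le_mahlerM hp (Units.ne_zero (a n0)) hn0) (le_ciSup hble n0)
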